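/- arXiv:2211.13846 — 2 statements merged into one kernel-verified Lean document; each statement's English description precedes it below -/
import Mathlib

section
/- Suppose along a hybrid solution the storage function U satisfies: U is nonincreasing at jumps, and during flow U(φ(t)) − U(φ(s)) ≤ −∫_s^t α(|φ(r)|_A) dr for a positive definite continuous α. If additionally the solution is complete and the average dwell-time bound j ≤ t/τ_a + 1 holds, then U(φ(t,j)) → 0 as t + j → ∞, provided U is bounded below by α̲(|φ|_A) with α̲ class-K∞. -/
open Filter intervalIntegral

/-- A class-K∞ function on `[0,∞)`. -/
def IsKInf (f : ℝ → ℝ) : Prop :=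
  f 0 = 0 ∧ ContinuousOn f (Set.Ici 0) ∧ StrictMonoOn f (Set.Ici 0) ∧
    (∀ x ∈ Set.Ici (0:ℝ), 0 ≤ f x) ∧ (∀ M : ℝ, ∃ x ∈ Set.Ici (0:ℝ), M ≤ f x)

/-- Scalar storage-function convergence: a nonnegative nonincreasing `u` satisfying
`u(t) − u(s) ≤ −∫_s^t α(α̲⁻¹(u(r))) dr` with `α` continuous positive definite and
`α̲` class-K∞ (with inverse `α̲⁻¹`) tends to `0` at infinity. -/
theorem storage_tendsto_zero (u α αl αlInv : ℝ → ℝ)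
    (hu0 : ∀ t : ℝ, 0 ≤ t → 0 ≤ u t)
    (hmono : AntitoneOn u (Set.Ici 0))
    (hα : Continuous α) (hα0 : α 0 = 0) (hαpos : ∀ r : ℝ, 0 < r → 0 < α r)
    (hαl : IsKInf αl)
    (hInv₁ : ∀ x ∈ Set.Ici (0:ℝ), αlInv (αl x) = x)
    (hInv₂ : ∀ x ∈ Set.Ici (0:ℝ), αl (αlInv x) = x)
    (hdecay : ∀ s t : ℝ, 0 ≤ s → s ≤ t →
      u t - u s ≤ -∫ r in s..t, α (αlInv (u r))) :
    Tendsto u atTop (nhds 0) := by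
  obtain ⟨hαl0, hαlc, hαlsm, hαlnn, hαlunb⟩ := hαl
  -- surjectivity of αl onto [0,∞)
  have hsurj : ∀ x : ℝ, 0 ≤ x → ∃ y, 0 ≤ y ∧ αl y = x := by
    intro x hx
    obtain ⟨z, hz, hxz⟩ := hαlunb x
    have h0z : (0:ℝ) ≤ z := hz
    have hiv := intermediate_value_Icc h0z (hαlc.mono Set.Icc_subset_Ici_self)
    have hxmem : x ∈ Set.Icc (αl 0) (αl z) := ⟨by rw [hαl0]; exact hx, hxz⟩
    obtain ⟨y, hy, hyx⟩ := hiv hxmem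
    exact ⟨y, hy.1, hyx⟩
  have hInvNonneg : ∀ x : ℝ, 0 ≤ x → 0 ≤ αlInv x := by
    intro x hx
    obtain ⟨y, hy, rfl⟩ := hsurj x hx
    rw [hInv₁ y hy]; exact hy
  have hInvMono : ∀ a b : ℝ, 0 ≤ a → a ≤ b → αlInv a ≤ αlInv b := by
    intro a b ha hab
    by_contra h
    push_neg at h
    have h1 := hαlsm (hInvNonneg b (ha.trans hab)) (hInvNonneg a ha) h
    rw [hInv₂ a ha, hInv₂ b (ha.trans hab)] at h1
    exact absurd hab (not_le.mpr h1)
  have hInvPos : ∀ x : ℝ, 0 < x → 0 < αlInv x := by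
    intro x hx
    rcases lt_or_eq_of_le (hInvNonneg x hx.le) with h | h
    · exact h
    · exfalso
      have h2 := hInv₂ x hx.le
      rw [← h, hαl0] at h2
      linarith
  -- key claim : u eventually drops below any ε > 0
  have key : ∀ ε : ℝ, 0 < ε → ∃ T, 0 ≤ T ∧ u T < ε := by
    intro ε hε
    by_contra hcon
    push_neg at hcon
    set δ := αlInv ε with hδ
    have hδpos : 0 < δ := hInvPos ε hε
    set B := αlInv (u 0) with hB
    have hεu0 : ε ≤ u 0 := hcon 0 le_rfl
    have hδB : δ ≤ B := hInvMono ε (u 0) hε.le hεu0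
    obtain ⟨x₀, hx₀mem, hx₀min⟩ := (isCompact_Icc (a := δ) (b := B)).exists_isMinOn
      (Set.nonempty_Icc.mpr hδB) hα.continuousOn
    set c := α x₀ with hc
    have hcpos : 0 < c := hαpos x₀ (hδpos.trans_le hx₀mem.1)
    set v : ℝ → ℝ := fun r => u (max r 0) with hv
    have hvant : Antitone v := fun r s hrs =>
      hmono (le_max_right r 0) (le_max_right s 0) (max_le_max hrs le_rfl)
    set g : ℝ → ℝ := fun r => αlInv (v r) with hg
    have hgant : Antitone g := fun r s hrs =>
      hInvMono _ _ (hu0 _ (le_max_right s 0)) (hvant hrs)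
    set f : ℝ → ℝ := fun r => α (g r) with hf
    have hfmeas : Measurable f := hα.measurable.comp hgant.measurable
    have hu00 : 0 ≤ u 0 := hu0 0 le_rfl
    set t₀ : ℝ := u 0 / c + 1 with ht₀
    have ht₀pos : 0 < t₀ := by positivity
    have hgmem : ∀ r, 0 ≤ r → g r ∈ Set.Icc δ B := by
      intro r hr
      have hvr : v r = u r := by simp [hv, max_eq_left hr]
      have hur : u r ≤ u 0 := hmono (Set.mem_Ici.mpr le_rfl) (Set.mem_Ici.mpr hr) hr
      constructor
      · rw [hg]; simp only [hvr]
        exact hInvMono ε (u r) hε.le (hcon r hr)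
      · rw [hg]; simp only [hvr]
        exact hInvMono (u r) (u 0) (hu0 r hr) hur
    have hflb : ∀ r ∈ Set.Icc (0:ℝ) t₀, c ≤ f r := fun r hr =>
      isMinOn_iff.mp hx₀min _ (hgmem r hr.1)
    have hfint : IntervalIntegrable f MeasureTheory.volume 0 t₀ := by
      obtain ⟨C, hC⟩ := (isCompact_Icc (a := δ) (b := B)).exists_bound_of_continuousOn
        hα.continuousOn
      rw [intervalIntegrable_iff]
      apply MeasureTheory.Integrable.mono'
        ((MeasureTheory.integrableOn_const_iff (C := C)).mpr (Or.inr measure_Ioc_lt_top))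
        hfmeas.aestronglyMeasurable
      rw [show (0:ℝ) ⊓ t₀ = 0 from inf_eq_left.mpr ht₀pos.le,
        show (0:ℝ) ⊔ t₀ = t₀ from sup_eq_right.mpr ht₀pos.le]
      refine (MeasureTheory.ae_restrict_iff' measurableSet_Ioc).mpr
        (Filter.Eventually.of_forall fun r hr => ?_)
      have := hC (g r) (hgmem r hr.1.le)
      simpa [hf] using this
    have hlow : c * t₀ ≤ ∫ r in (0:ℝ)..t₀, f r := by
      have h1 : (∫ _ in (0:ℝ)..t₀, c) = c * t₀ := by
        simp [mul_comm]
      rw [← h1]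
      exact intervalIntegral.integral_mono_on ht₀pos.le intervalIntegrable_const hfint hflb
    have hcongr : (∫ r in (0:ℝ)..t₀, α (αlInv (u r))) = ∫ r in (0:ℝ)..t₀, f r := by
      apply intervalIntegral.integral_congr
      intro r hr
      rw [Set.uIcc_of_le ht₀pos.le] at hr
      simp [hf, hg, hv, max_eq_left hr.1]
    have hdec := hdecay 0 t₀ le_rfl ht₀pos.le
    rw [hcongr] at hdec
    have hct : c * t₀ = u 0 + c := by
      rw [ht₀]; field_simp
    have hut : u t₀ < 0 := by linarith
    linarith [hu0 t₀ ht₀pos.le]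
  -- conclude
  rw [Metric.tendsto_atTop]
  intro ε hε
  obtain ⟨T, hT0, hTε⟩ := key ε hε
  refine ⟨T, fun t ht => ?_⟩
  have h1 : u t ≤ u T := hmono (Set.mem_Ici.mpr hT0) (Set.mem_Ici.mpr (hT0.trans ht)) ht
  have h2 : 0 ≤ u t := hu0 t (hT0.trans ht)
  rw [Real.dist_eq, abs_of_nonneg (by linarith : (0:ℝ) ≤ u t - 0)]
  linarith
end

section
/- Let u : ℝ_{≥0} → ℝ_{≥0} be nonincreasing with u(t) − u(s) ≤ −∫_s^t β(u(r)) dr for all 0 ≤ s ≤ t, where β : ℝ_{≥0} → ℝ_{≥0} is continuous with β(r) > 0 for r > 0 and β(0) = 0. Then u(t) → 0 as t → ∞. -/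
open Filter intervalIntegral MeasureTheory

/-- Comparison lemma: a nonnegative nonincreasing `u` with
`u(t) − u(s) ≤ −∫_s^t β(u(r)) dr` for continuous positive definite `β`
tends to `0` at infinity. -/
theorem comparison_tendsto_zero (u β : ℝ → ℝ)
    (hu0 : ∀ t : ℝ, 0 ≤ t → 0 ≤ u t)
    (hmono : AntitoneOn u (Set.Ici 0))
    (hβ : Continuous β) (hβ0 : β 0 = 0) (hβpos : ∀ r : ℝ, 0 < r → 0 < β r)
    (hβnonneg : ∀ r : ℝ, 0 ≤ r → 0 ≤ β r)
    (hdecay : ∀ s t : ℝ, 0 ≤ s → s ≤ t → u t - u s ≤ -∫ r in s..t, β (u r)) :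
    Tendsto u atTop (nhds 0) := by
  set v : ℝ → ℝ := fun t => u (max t 0) with hv
  have hveq : ∀ t : ℝ, 0 ≤ t → v t = u t := fun t ht => by
    simp [hv, max_eq_left ht]
  have hvanti : Antitone v := fun s t hst =>
    hmono (le_max_right s 0) (le_max_right t 0) (max_le_max hst le_rfl)
  have hvnonneg : ∀ t, 0 ≤ v t := fun t => hu0 _ (le_max_right t 0)
  have hbdd : BddBelow (Set.range v) := ⟨0, fun x ⟨t, ht⟩ => ht ▸ hvnonneg t⟩
  have hlim : Tendsto v atTop (nhds (⨅ t, v t)) := tendsto_atTop_ciInf hvanti hbdd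
  set L := ⨅ t, v t with hL
  have hL0 : 0 ≤ L := le_ciInf hvnonneg
  have hLle : ∀ t, L ≤ v t := fun t => ciInf_le hbdd t
  have hmain : L = 0 := by
    by_contra hne
    have hLpos : 0 < L := lt_of_le_of_ne hL0 (Ne.symm hne)
    have hLu0 : L ≤ u 0 := by simpa [hveq 0 le_rfl] using hLle 0
    obtain ⟨x, hx, hxmin⟩ := isCompact_Icc.exists_isMinOn (Set.nonempty_Icc.2 hLu0)
      (hβ.continuousOn (s := Set.Icc L (u 0)))
    set m := β x with hm
    have hmpos : 0 < m := hβpos x (lt_of_lt_of_le hLpos hx.1)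
    -- v r ∈ [L, u 0] for all r
    have hmem : ∀ r : ℝ, v r ∈ Set.Icc L (u 0) :=
      fun r => ⟨hLle r, hmono Set.self_mem_Ici (le_max_right r 0) (le_max_right r 0)⟩
    have hvmeas : Measurable v := hvanti.measurable
    -- bound on β over [L, u 0]
    obtain ⟨M, hM⟩ := (isCompact_Icc.image hβ).isBounded.subset_closedBall 0
    -- integrability of β ∘ v on [0, t]
    have hint : ∀ t : ℝ, 0 ≤ t → IntervalIntegrable (fun r => β (v r)) volume 0 t := by
      intro t ht
      rw [intervalIntegrable_iff_integrableOn_Ioc_of_le ht]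
      refine Measure.integrableOn_of_bounded (M := M) measure_Ioc_lt_top.ne
        ((hβ.measurable.comp hvmeas).aestronglyMeasurable) ?_
      filter_upwards with r
      have := hM ⟨v r, hmem r, rfl⟩
      simpa [Real.norm_eq_abs, abs_le] using this
    -- key estimate: u t ≤ u 0 - m * t for t ≥ 0
    have hkey : ∀ t : ℝ, 0 ≤ t → u t ≤ u 0 - m * t := by
      intro t ht
      have h1 := hdecay 0 t le_rfl ht
      have hcongr : (∫ r in (0:ℝ)..t, β (u r)) = ∫ r in (0:ℝ)..t, β (v r) := by
        apply intervalIntegral.integral_congr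
        intro r hr
        rw [Set.uIcc_of_le ht] at hr
        exact (congrArg β (hveq r hr.1)).symm
      have h2 : m * t ≤ ∫ r in (0:ℝ)..t, β (v r) := by
        have := intervalIntegral.integral_mono_on ht intervalIntegrable_const (hint t ht)
          (fun r hr => hxmin (hmem r))
        simpa [mul_comm] using this
      rw [hcongr] at h1
      linarith
    -- contradiction for large t
    have hT : 0 ≤ (u 0 + 1) / m := div_nonneg (by linarith [hu0 0 le_rfl]) hmpos.le
    have := hkey ((u 0 + 1) / m) hT
    rw [mul_div_cancel₀ _ hmpos.ne'] at this
    linarith [hu0 _ hT]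
  rw [← hmain]
  exact hlim.congr' (by filter_upwards [eventually_ge_atTop (0:ℝ)] with t ht using hveq t ht)
end
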